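/- Let O be a 2S×2S real orthogonal matrix and let e be any standard basis vector of ℝ^{2S}, say with its single nonzero entry 1 in position j. Then there exists a 2S×2S real orthogonal symplectic matrix W such that OW acts trivially on e: column j of OW equals e and row j of OW equals eᵀ. -/

import Mathlib

open Matrix

/-- The standard symplectic form `Ω` on `2S` phase-space coordinates ordered
`(q₁,p₁,…,q_S,p_S)`: the direct sum of `S` copies of `[[0,1],[-1,0]]`. -/
def Omega (S : ℕ) : Matrix (Fin (2 * S)) (Fin (2 * S)) ℝ :=
  Matrix.of fun i j =>
    if i.val + 1 = j.val ∧ i.val % 2 = 0 then (1 : ℝ)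
    else if j.val + 1 = i.val ∧ j.val % 2 = 0 then -1 else 0

/-- A `2S × 2S` real matrix is orthogonal symplectic if `WᵀW = 1` and `WᵀΩW = Ω`. -/
def IsOrthoSymp (S : ℕ) (W : Matrix (Fin (2 * S)) (Fin (2 * S)) ℝ) : Prop :=
  Wᵀ * W = 1 ∧ Wᵀ * Omega S * W = Omega S

section Aux

variable {S : ℕ}

@[simp] lemma mod2_two_mul (k : ℕ) : (2 * k) % 2 = 0 := by omega
@[simp] lemma mod2_two_mul_add_one (k : ℕ) : (2 * k + 1) % 2 = 1 := by omega
@[simp] lemma div2_two_mul (k : ℕ) : (2 * k) / 2 = k := by omega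
@[simp] lemma div2_two_mul_add_one (k : ℕ) : (2 * k + 1) / 2 = k := by omega

def d2 (i : Fin (2 * S)) : Fin S := ⟨i.val / 2, by have := i.isLt; omega⟩

@[simp] lemma d2_even (k : Fin S) (h : 2 * k.val < 2 * S) :
    d2 (⟨2 * k.val, h⟩ : Fin (2 * S)) = k := by
  apply Fin.ext; simp [d2]

@[simp] lemma d2_odd (k : Fin S) (h : 2 * k.val + 1 < 2 * S) :
    d2 (⟨2 * k.val + 1, h⟩ : Fin (2 * S)) = k := by
  apply Fin.ext; simp [d2]

def cmat (U : Matrix (Fin S) (Fin S) ℂ) : Matrix (Fin (2 * S)) (Fin (2 * S)) ℝ :=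
  Matrix.of fun i j =>
    if i.val % 2 = 0 then
      (if j.val % 2 = 0 then (U (d2 i) (d2 j)).re else -(U (d2 i) (d2 j)).im)
    else
      (if j.val % 2 = 0 then (U (d2 i) (d2 j)).im else (U (d2 i) (d2 j)).re)

def pairEquiv (S : ℕ) : Fin S × Fin 2 ≃ Fin (2 * S) :=
  finProdFinEquiv.trans (finCongr (by ring))

@[simp] lemma pairEquiv_val (p : Fin S × Fin 2) :
    ((pairEquiv S p) : ℕ) = p.2.val + 2 * p.1.val := by
  simp [pairEquiv, finProdFinEquiv]

lemma sum_pair (f : Fin (2 * S) → ℝ) :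
    ∑ i, f i = ∑ k : Fin S,
      (f ⟨2 * k.val, by have := k.isLt; omega⟩ + f ⟨2 * k.val + 1, by have := k.isLt; omega⟩) := by
  rw [← Equiv.sum_comp (pairEquiv S) f, Fintype.sum_prod_type]
  refine Finset.sum_congr rfl fun k _ => ?_
  rw [Fin.sum_univ_two]
  congr 1 <;> · apply congrArg; apply Fin.ext; simp; try omega

lemma cmat_conjTranspose (U : Matrix (Fin S) (Fin S) ℂ) : cmat Uᴴ = (cmat U)ᵀ := by
  ext i j
  by_cases hi : i.val % 2 = 0 <;> by_cases hj : j.val % 2 = 0 <;>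
    simp [cmat, hi, hj, conjTranspose_apply, Complex.star_def]

lemma cmat_one : cmat (1 : Matrix (Fin S) (Fin S) ℂ) = 1 := by
  ext i j
  have hd : d2 i = d2 j ↔ (i.val / 2 = j.val / 2) := by
    rw [Fin.ext_iff]; rfl
  have hij : i = j ↔ i.val = j.val := Fin.ext_iff
  by_cases hi : i.val % 2 = 0 <;> by_cases hj : j.val % 2 = 0 <;>
    simp only [cmat, Matrix.of_apply, hi, hj, if_true, if_false, Matrix.one_apply] <;>
    split_ifs with h1 h2 <;>
    simp_all [hd, hij, Complex.one_re] <;> omega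

lemma cmat_mul (U V : Matrix (Fin S) (Fin S) ℂ) : cmat (U * V) = cmat U * cmat V := by
  ext i j
  rw [Matrix.mul_apply, sum_pair (fun t => cmat U i t * cmat V t j)]
  have key : ∀ (x : ℝ), ((∑ k : Fin S, U (d2 i) k * V k (d2 j)) = ∑ k : Fin S,
      Complex.mk (U (d2 i) k).re (U (d2 i) k).im * V k (d2 j)) := by intro _; rfl
  by_cases hi : i.val % 2 = 0 <;> by_cases hj : j.val % 2 = 0 <;>
    · simp only [cmat, Matrix.of_apply, hi, hj, if_true, if_false, Matrix.mul_apply,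
        mod2_two_mul, mod2_two_mul_add_one, d2_even, d2_odd, Complex.re_sum, Complex.im_sum,
        ← Finset.sum_neg_distrib]
      refine Finset.sum_congr rfl fun k _ => ?_
      simp only [Complex.mul_re, Complex.mul_im, Nat.one_ne_zero, if_false]
      ring

lemma cmat_negI_smul_one :
    cmat ((-Complex.I) • (1 : Matrix (Fin S) (Fin S) ℂ)) = Omega S := by
  ext i j
  have hd : d2 i = d2 j ↔ (i.val / 2 = j.val / 2) := by
    rw [Fin.ext_iff]; rfl
  by_cases hi : i.val % 2 = 0 <;> by_cases hj : j.val % 2 = 0 <;>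
    simp only [cmat, Omega, Matrix.of_apply, hi, hj, if_true, if_false,
      Matrix.smul_apply, Matrix.one_apply, smul_eq_mul, mul_ite, mul_one, mul_zero] <;>
    split_ifs with h1 h2 h3 <;>
    simp_all [hd, Complex.I_re, Complex.I_im] <;> omega


end Aux

/-- For any `2S × 2S` real orthogonal `O` and any standard basis
vector `e_j`, there is an orthogonal symplectic `W` such that `O * W` acts trivially
on `e_j`: column `j` of `O * W` equals `e_j` and row `j` of `O * W` equals `e_jᵀ`. -/
theorem exists_ortho_symp_fixes_basis_vector (S : ℕ)
    (O : Matrix (Fin (2 * S)) (Fin (2 * S)) ℝ) (hO : Oᵀ * O = 1)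
    (j : Fin (2 * S)) :
    ∃ W : Matrix (Fin (2 * S)) (Fin (2 * S)) ℝ,
      IsOrthoSymp S W ∧
      (∀ l : Fin (2 * S), (O * W) l j = if l = j then 1 else 0) ∧
      (∀ l : Fin (2 * S), (O * W) j l = if j = l then 1 else 0) := by
  classical
  have hO' : O * Oᵀ = 1 := mul_eq_one_comm.mp hO
  -- the target unit vector, as a complex vector
  set z : EuclideanSpace ℂ (Fin S) := WithLp.toLp 2 fun k : Fin S =>
    if j.val % 2 = 0 then
      ((O j ⟨2 * k.val, by have := k.isLt; omega⟩ : ℝ) : ℂ) +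
        (O j ⟨2 * k.val + 1, by have := k.isLt; omega⟩ : ℝ) * Complex.I
    else
      ((O j ⟨2 * k.val + 1, by have := k.isLt; omega⟩ : ℝ) : ℂ) -
        (O j ⟨2 * k.val, by have := k.isLt; omega⟩ : ℝ) * Complex.I
    with hzdef
  have hOrow : ∑ t, O j t * O j t = 1 := by
    have h1 := congrFun (congrFun hO' j) j
    rw [Matrix.mul_apply] at h1
    simpa [Matrix.transpose_apply, Matrix.one_apply] using h1
  have hz1 : ‖z‖ = 1 := by
    rw [EuclideanSpace.norm_eq]
    have hs : ∑ i, ‖z i‖ ^ 2 = 1 := by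
      rw [← hOrow, sum_pair (fun t => O j t * O j t)]
      refine Finset.sum_congr rfl fun k _ => ?_
      by_cases hj2 : j.val % 2 = 0 <;>
        · simp only [hzdef, hj2, if_true, if_false, Complex.sq_norm,
            Complex.normSq_apply, Complex.add_re, Complex.sub_re, Complex.add_im,
            Complex.sub_im, Complex.ofReal_re, Complex.ofReal_im, Complex.mul_re,
            Complex.mul_im, Complex.I_re, Complex.I_im]
          ring
    rw [hs, Real.sqrt_one]
  have horth : Orthonormal ℂ (({d2 j} : Set (Fin S)).restrict (fun _ : Fin S => z)) := by
    constructor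
    · rintro ⟨i, hi⟩; exact hz1
    · rintro ⟨a, ha⟩ ⟨c, hc⟩ hac
      exact absurd (Subtype.ext (ha.trans hc.symm)) hac
  obtain ⟨b, hb⟩ := horth.exists_orthonormalBasis_extension_of_card_eq (by simp)
  have hbm : b (d2 j) = z := hb (d2 j) rfl
  set U : Matrix (Fin S) (Fin S) ℂ := Matrix.of fun k l => b l k with hUdef
  have hU : Uᴴ * U = 1 := by
    ext k l
    have h2 := (orthonormal_iff_ite.mp b.orthonormal) k l
    rw [PiLp.inner_apply] at h2
    simp only [RCLike.inner_apply] at h2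
    rw [Matrix.mul_apply, Matrix.one_apply]
    simpa [hUdef, Matrix.conjTranspose_apply, mul_comm] using h2
  have hUU : Uᴴ * ((-Complex.I) • 1) * U = (-Complex.I) • (1 : Matrix (Fin S) (Fin S) ℂ) := by
    rw [Matrix.mul_smul, Matrix.mul_one, Matrix.smul_mul, hU]
  have hUj : ∀ k : Fin S, U k (d2 j) = z k := fun k => by
    show b (d2 j) k = z k
    rw [hbm]
  -- column values of cmat U at column j
  have hWe : ∀ (k : Fin S) (h : 2 * k.val < 2 * S),
      cmat U ⟨2 * k.val, h⟩ j = O j ⟨2 * k.val, h⟩ := by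
    intro k h
    by_cases hj2 : j.val % 2 = 0 <;>
      · simp only [cmat, Matrix.of_apply, mod2_two_mul, d2_even, hj2,
          if_true, if_false, hUj, hzdef]
        simp [hj2]
  have hWo : ∀ (k : Fin S) (h : 2 * k.val + 1 < 2 * S),
      cmat U ⟨2 * k.val + 1, h⟩ j = O j ⟨2 * k.val + 1, h⟩ := by
    intro k h
    by_cases hj2 : j.val % 2 = 0 <;>
      · simp only [cmat, Matrix.of_apply, mod2_two_mul_add_one, d2_odd, hj2,
          if_true, if_false, hUj, hzdef]
        simp [hj2]
  have hWW : (cmat U)ᵀ * cmat U = 1 := by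
    rw [← cmat_conjTranspose, ← cmat_mul, hU, cmat_one]
  have hcol : ∀ l : Fin (2 * S), (O * cmat U) l j = if l = j then 1 else 0 := by
    intro l
    rw [Matrix.mul_apply, sum_pair (fun t => O l t * cmat U t j)]
    have hstep : ∀ k : Fin S, k ∈ Finset.univ →
        (O l ⟨2 * k.val, by have := k.isLt; omega⟩ *
            cmat U ⟨2 * k.val, by have := k.isLt; omega⟩ j +
          O l ⟨2 * k.val + 1, by have := k.isLt; omega⟩ *
            cmat U ⟨2 * k.val + 1, by have := k.isLt; omega⟩ j)
        = (O l ⟨2 * k.val, by have := k.isLt; omega⟩ * O j ⟨2 * k.val, by have := k.isLt; omega⟩ +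
          O l ⟨2 * k.val + 1, by have := k.isLt; omega⟩ *
            O j ⟨2 * k.val + 1, by have := k.isLt; omega⟩) := by
      intro k _
      rw [hWe, hWo]
    rw [Finset.sum_congr rfl hstep, ← sum_pair (fun t => O l t * O j t)]
    have h1 := congrFun (congrFun hO' l) j
    rw [Matrix.mul_apply] at h1
    simpa [Matrix.transpose_apply, Matrix.one_apply] using h1
  have hM : (O * cmat U)ᵀ * (O * cmat U) = 1 := by
    rw [Matrix.transpose_mul, Matrix.mul_assoc, ← Matrix.mul_assoc Oᵀ O, hO,
      Matrix.one_mul, hWW]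
  refine ⟨cmat U, ⟨hWW, ?_⟩, hcol, ?_⟩
  · rw [← cmat_conjTranspose, ← cmat_negI_smul_one, ← cmat_mul, ← cmat_mul, hUU]
  · intro l
    have h1 := congrFun (congrFun hM j) l
    rw [Matrix.mul_apply] at h1
    have h0 : ∑ t, (if t = j then (1 : ℝ) else 0) * (O * cmat U) t l
        = (O * cmat U) j l := by
      simp [ite_mul, Finset.sum_ite_eq']
    rw [← Matrix.one_apply (i := j) (j := l), ← h1, ← h0]
    refine Finset.sum_congr rfl fun t _ => ?_
    rw [Matrix.transpose_apply, hcol t]
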